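/- arXiv:1206.5397 — 2 statements merged into one kernel-verified Lean document; each statement's English description precedes it below -/
import Mathlib

section
/- For an integer k ≥ 3, every k-chordal graph has a k-simplicial vertex. -/
open SimpleGraph

variable {V : Type*}

/-- Open neighbourhood of a set of vertices. -/
def setNbhd (G : SimpleGraph V) (A : Set V) : Set V :=
  {x | x ∉ A ∧ ∃ a ∈ A, G.Adj a x}

/-- Closed neighbourhood of a set of vertices. -/
def closedNbhd (G : SimpleGraph V) (A : Set V) : Set V :=
  A ∪ setNbhd G A

/-- `A` is a connected non-dominating set: `G[A]` is connected and `N[A] ⊊ V`. -/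
def ConnNonDom (G : SimpleGraph V) (A : Set V) : Prop :=
  (G.induce A).Connected ∧ closedNbhd G A ≠ Set.univ

/-- `A` is a maximal connected non-dominating set. -/
def MaxConnNonDom (G : SimpleGraph V) (A : Set V) : Prop :=
  ConnNonDom G A ∧ ∀ A' : Set V, A ⊆ A' → ConnNonDom G A' → A' = A

/-- `G` is not complete. -/
def NonComplete (G : SimpleGraph V) : Prop :=
  ∃ u v : V, u ≠ v ∧ ¬ G.Adj u v

/-- A chordless (induced) path. -/
def IsInducedPath (G : SimpleGraph V) {x y : V} (p : G.Walk x y) : Prop :=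
  p.IsPath ∧ ∀ u w : V, u ∈ p.support → w ∈ p.support → G.Adj u w → s(u, w) ∈ p.edges

/-- A chordless (induced) cycle. -/
def IsInducedCycle (G : SimpleGraph V) {v : V} (c : G.Walk v v) : Prop :=
  c.IsCycle ∧ ∀ u w : V, u ∈ c.support → w ∈ c.support → G.Adj u w → s(u, w) ∈ c.edges

/-- `G` is `k`-chordal: no induced cycle of length greater than `k`. -/
def KChordal (G : SimpleGraph V) (k : ℕ) : Prop :=
  ∀ ⦃v : V⦄ (c : G.Walk v v), IsInducedCycle G c → c.length ≤ k

/-- `u` is an internal vertex of the path `p`. -/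
def InternalVert (G : SimpleGraph V) {x y : V} (p : G.Walk x y) (u : V) : Prop :=
  u ∈ p.support ∧ u ≠ x ∧ u ≠ y

/-- Condition (C1): any two distinct neighbours of `v` are at distance at most `k-2`
in `G - v`. -/
def SimpC1 (G : SimpleGraph V) (k : ℕ) (v : V) : Prop :=
  ∀ x y : V, G.Adj v x → G.Adj v y → x ≠ y →
    ∃ (hx : x ≠ v) (hy : y ≠ v)
      (p : (G.induce {u : V | u ≠ v}).Walk ⟨x, hx⟩ ⟨y, hy⟩), p.length ≤ k - 2

/-- Condition (C2): every induced path between non-adjacent neighbours of `v` whose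
internal vertices avoid `N[v]` has at most `k-2` edges. -/
def SimpC2 (G : SimpleGraph V) (k : ℕ) (v : V) : Prop :=
  ∀ x y : V, G.Adj v x → G.Adj v y → ¬ G.Adj x y → x ≠ y →
    ∀ p : G.Walk x y, IsInducedPath G p →
      (∀ u : V, InternalVert G p u → u ≠ v ∧ ¬ G.Adj v u) →
      p.length ≤ k - 2

/-- `v` is `k`-simplicial in `G`. -/
def KSimplicial (G : SimpleGraph V) (k : ℕ) (v : V) : Prop :=
  SimpC1 G k v ∧ SimpC2 G k v

/-- Vertices at position `≥ i` in the ordering `σ`. -/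
def laterSet {V : Type*} [Fintype V] (σ : Fin (Fintype.card V) ≃ V)
    (i : Fin (Fintype.card V)) : Set V := {w | i ≤ σ.symm w}

/-- `σ` is a `k`-simplicial ordering of the vertices of `G`. -/
def KSimplicialOrdering {V : Type*} [Fintype V] (G : SimpleGraph V) (k : ℕ)
    (σ : Fin (Fintype.card V) ≃ V) : Prop :=
  ∀ i : Fin (Fintype.card V),
    KSimplicial (G.induce (laterSet σ i)) k ⟨σ i, by simp [laterSet]⟩

/-- `S` separates `a` from `b`. -/
def IsSeparator (G : SimpleGraph V) (a b : V) (S : Set V) : Prop :=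
  a ∉ S ∧ b ∉ S ∧ ∀ p : G.Walk a b, ∃ s ∈ S, s ∈ p.support

/-- `S` is a minimal `(a,b)`-vertex separator. -/
def IsMinSeparator (G : SimpleGraph V) (a b : V) (S : Set V) : Prop :=
  IsSeparator G a b S ∧ ∀ T : Set V, T ⊂ S → ¬ IsSeparator G a b T

/-- `S` is a minimal vertex separator of `G`. -/
def IsMinVertexSeparator (G : SimpleGraph V) (S : Set V) : Prop :=
  ∃ a b : V, a ≠ b ∧ ¬ G.Adj a b ∧ IsMinSeparator G a b S

/-- `u` lies in the connected component `c` of `G - S`. -/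
def InComponent (G : SimpleGraph V) (S : Set V)
    (c : (G.induce Sᶜ).ConnectedComponent) (u : V) : Prop :=
  ∃ h : u ∈ Sᶜ, (G.induce Sᶜ).connectedComponentMk ⟨u, h⟩ = c

/-- `v` is 3-simplicial: its neighbourhood is a clique. -/
def Simplicial3 (G : SimpleGraph V) (v : V) : Prop :=
  ∀ x y : V, G.Adj v x → G.Adj v y → x ≠ y → G.Adj x y

section Helpers

variable {W : Type*} {G : SimpleGraph W}

lemma getVert_succ_edge {x y : W} (p : G.Walk x y) :
    ∀ i, i < p.length → s(p.getVert i, p.getVert (i+1)) ∈ p.edges := by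
  induction p with
  | nil => intro i hi; simp at hi
  | cons h q ih =>
    intro i hi
    cases i with
    | zero =>
      rw [Walk.getVert_cons_succ, Walk.getVert_zero]
      simp
    | succ n =>
      simp only [Walk.getVert_cons_succ, Walk.edges_cons, List.mem_cons]
      right
      exact ih n (by simpa [Nat.succ_lt_succ_iff] using hi)

lemma exists_prefix {x y : W} :
    ∀ (p : G.Walk x y) (i : ℕ), i ≤ p.length →
      ∃ q : G.Walk x (p.getVert i), q.length = i := by
  intro p
  induction p with
  | nil =>
    intro i hi
    have : i = 0 := by simpa using hi
    subst this
    exact ⟨Walk.nil.copy rfl rfl, by simp⟩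
  | cons h q ih =>
    intro i hi
    cases i with
    | zero => exact ⟨Walk.nil.copy rfl rfl, rfl⟩
    | succ n =>
      obtain ⟨q', hq'⟩ := ih n (by simpa [Nat.succ_le_succ_iff] using hi)
      exact ⟨Walk.cons h q', by simp [hq']⟩

lemma exists_suffix {x y : W} :
    ∀ (p : G.Walk x y) (i : ℕ),
      ∃ r : G.Walk (p.getVert i) y, r.length = p.length - i := by
  intro p
  induction p with
  | nil => intro i; exact ⟨Walk.nil.copy rfl rfl, by simp⟩
  | cons h q ih =>
    intro i
    cases i with
    | zero => exact ⟨(Walk.cons h q).copy rfl rfl, rfl⟩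
    | succ n =>
      obtain ⟨r, hr⟩ := ih n
      exact ⟨r, by simpa using hr⟩

lemma exists_induced_path {x y : W} (h : G.Reachable x y) :
    ∃ p : G.Walk x y, IsInducedPath G p := by
  haveI := Classical.decEq W
  obtain ⟨p₀, hp₀⟩ := h.exists_walk_length_eq_dist
  have hlen : p₀.bypass.length = G.dist x y :=
    le_antisymm (hp₀ ▸ p₀.length_bypass_le) (G.dist_le _)
  set p := p₀.bypass with hp
  refine ⟨p, p₀.bypass_isPath, ?_⟩
  have key : ∀ (i j : ℕ), i < j → j ≤ p.length → G.Adj (p.getVert i) (p.getVert j) →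
      s(p.getVert i, p.getVert j) ∈ p.edges := by
    intro i j hij hj hadj
    rcases eq_or_lt_of_le (Nat.succ_le_of_lt hij) with hj1 | hj2
    · rw [← hj1]
      exact getVert_succ_edge p i (by omega)
    · exfalso
      obtain ⟨q, hq⟩ := exists_prefix p i (by omega)
      obtain ⟨r, hr⟩ := exists_suffix p j
      have hd := G.dist_le (q.append (Walk.cons hadj r))
      rw [Walk.length_append, Walk.length_cons, hq, hr, ← hlen] at hd
      omega
  intro u w hu hw hadj
  rw [Walk.mem_support_iff_exists_getVert] at hu hw
  obtain ⟨i, hiu, hile⟩ := hu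
  obtain ⟨j, hjw, hjle⟩ := hw
  have hne : i ≠ j := by
    rintro rfl
    rw [hiu] at hjw
    exact hadj.ne (hjw ▸ rfl)
  rcases hne.lt_or_gt with hlt | hlt
  · have := key i j hlt hjle (by rw [hiu, hjw]; exact hadj)
    rwa [hiu, hjw] at this
  · have := key j i hlt hile (by rw [hiu, hjw]; exact hadj.symm)
    rw [hiu, hjw] at this
    rwa [Sym2.eq_swap] at this

lemma walk_to_induce {s : Set W} :
    ∀ {a b : W} (p : G.Walk a b) (ha : a ∈ s) (hb : b ∈ s),
      (∀ u ∈ p.support, u ∈ s) →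
      ∃ q : (G.induce s).Walk ⟨a, ha⟩ ⟨b, hb⟩, q.length = p.length := by
  intro a b p
  induction p with
  | nil => intro ha hb _; exact ⟨Walk.nil, rfl⟩
  | @cons a c b h q ih =>
    intro ha hb hp
    have hc : c ∈ s := hp c (by simp)
    obtain ⟨q', hq'⟩ := ih hc hb (fun u hu => hp u (by simp [hu]))
    exact ⟨Walk.cons (by exact h) q', congrArg (· + 1) hq'⟩

end Helpers

section Main

universe u

variable {W : Type*} {G : SimpleGraph W}

lemma inducedPath_length_le {k : ℕ} (hch : KChordal G k) {v x y : W}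
    (hvx : G.Adj v x) (hvy : G.Adj v y) (hxy : ¬ G.Adj x y) (hne : x ≠ y)
    (P : G.Walk x y) (hP : IsInducedPath G P)
    (hint : ∀ u ∈ P.support, u ≠ x → u ≠ y → u ≠ v ∧ ¬ G.Adj v u) :
    P.length ≤ k - 2 := by
  have hvP : v ∉ P.support := by
    intro hv
    rcases eq_or_ne v x with rfl | h1
    · exact G.loopless.irrefl _ hvx
    · rcases eq_or_ne v y with rfl | h2
      · exact G.loopless.irrefl _ hvy
      · exact (hint v hv h1 h2).1 rfl
  set Q : G.Walk x v := P.concat hvy.symm with hQdef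
  have hQsup : Q.support = P.support ++ [v] := by
    rw [hQdef, Walk.support_concat]
  have hQpath : Q.IsPath := by
    rw [Walk.isPath_def, hQsup]
    simp [List.nodup_append, hP.1.support_nodup, hvP]
    rintro a ha rfl; exact hvP ha
  have hQedges : Q.edges = P.edges ++ [s(y, v)] := by
    rw [hQdef, Walk.edges_concat, List.concat_eq_append]
  have hnotedge : s(v, x) ∉ Q.edges := by
    rw [hQedges]
    intro hmem
    rcases List.mem_append.mp hmem with hm | hm
    · exact hvP (Walk.fst_mem_support_of_mem_edges P hm)
    · rw [List.mem_singleton] at hm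
      rcases Sym2.eq_iff.mp hm with ⟨h1, -⟩ | ⟨-, h2⟩
      · exact hvy.ne h1
      · exact hne h2
  set c : G.Walk v v := Walk.cons hvx Q with hcdef
  have hcyc : c.IsCycle := (Walk.cons_isCycle_iff Q hvx).mpr ⟨hQpath, hnotedge⟩
  have hcsup : c.support = v :: (P.support ++ [v]) := by
    rw [hcdef, Walk.support_cons, hQsup]
  have hcedges : c.edges = s(v, x) :: (P.edges ++ [s(y, v)]) := by
    rw [hcdef, Walk.edges_cons, hQedges]
  have hmemc : ∀ z ∈ c.support, z = v ∨ z ∈ P.support := by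
    intro z hz
    rw [hcsup] at hz
    simp only [List.mem_cons, List.mem_append, List.mem_singleton] at hz
    tauto
  have hvadj : ∀ w ∈ P.support, G.Adj v w → s(v, w) ∈ c.edges := by
    intro w hw hadj
    rcases eq_or_ne w x with rfl | h1
    · rw [hcedges]; exact List.mem_cons_self
    · rcases eq_or_ne w y with rfl | h2
      · rw [hcedges]
        refine List.mem_cons_of_mem _ (List.mem_append_right _ ?_)
        rw [List.mem_singleton, Sym2.eq_swap]
      · exact absurd hadj (hint w hw h1 h2).2
  have hind : ∀ u w, u ∈ c.support → w ∈ c.support → G.Adj u w → s(u, w) ∈ c.edges := by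
    intro u w hu hw hadj
    rcases hmemc u hu with rfl | huP
    · rcases hmemc w hw with rfl | hwP
      · exact absurd hadj (G.loopless.irrefl _)
      · exact hvadj w hwP hadj
    · rcases hmemc w hw with rfl | hwP
      · rw [Sym2.eq_swap]; exact hvadj u huP hadj.symm
      · rw [hcedges]
        exact List.mem_cons_of_mem _ (List.mem_append_left _ (hP.2 u w huP hwP hadj))
  have hlen := hch c ⟨hcyc, hind⟩
  have hclen : c.length = P.length + 2 := by
    rw [hcdef, Walk.length_cons, hQdef, Walk.length_concat]
  omega

lemma simpC2_of_chordal {k : ℕ} (hch : KChordal G k) (v : W) : SimpC2 G k v := by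
  intro x y hvx hvy hxy hne p hp hint
  exact inducedPath_length_le hch hvx hvy hxy hne p hp
    (fun u hu hux huy => hint u ⟨hu, hux, huy⟩)

lemma induce_kchordal {k : ℕ} (hch : KChordal G k) (s : Set W) :
    KChordal (G.induce s) k := by
  intro v c hc
  have hinj : Function.Injective (SimpleGraph.Embedding.induce (G := G) s).toHom :=
    Subtype.val_injective
  set c' := c.map (SimpleGraph.Embedding.induce (G := G) s).toHom with hc'def
  have hcyc : c'.IsCycle := (Walk.map_isCycle_iff_of_injective hinj).mpr hc.1
  have hind : ∀ u w, u ∈ c'.support → w ∈ c'.support → G.Adj u w → s(u, w) ∈ c'.edges := by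
    intro u w hu hw hadj
    rw [hc'def, Walk.support_map] at hu hw
    obtain ⟨u', hu', rfl⟩ := List.mem_map.mp hu
    obtain ⟨w', hw', rfl⟩ := List.mem_map.mp hw
    have hadj' : (G.induce s).Adj u' w' := by exact hadj
    have := hc.2 u' w' hu' hw' hadj'
    rw [hc'def, Walk.edges_map]
    exact List.mem_map.mpr ⟨s(u', w'), this, Sym2.map_pair_eq _ _ _⟩
  have := hch c' ⟨hcyc, hind⟩
  rwa [hc'def, Walk.length_map] at this

lemma connected_insert {A : Set W} (hA : (G.induce A).Connected) {s a : W}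
    (ha : a ∈ A) (hadj : G.Adj a s) : (G.induce (insert s A)).Connected := by
  have hsub : A ⊆ insert s A := Set.subset_insert _ _
  have hreach : ∀ x : ↥(insert s A),
      (G.induce (insert s A)).Reachable x ⟨a, hsub ha⟩ := by
    rintro ⟨x, hx⟩
    rcases Set.mem_insert_iff.mp hx with rfl | hxA
    · exact Adj.reachable (by exact hadj.symm)
    · exact (hA.preconnected ⟨x, hxA⟩ ⟨a, ha⟩).map (G.induceHomOfLE hsub).toHom
  rw [connected_iff]
  exact ⟨fun x y => (hreach x).trans (hreach y).symm, ⟨⟨s, Set.mem_insert _ _⟩⟩⟩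

lemma key {k : ℕ} (hk : 3 ≤ k) :
    ∀ (n : ℕ) {W : Type u} [Finite W] (G : SimpleGraph W), KChordal G k →
      Nat.card W ≤ n → Nonempty W → ∃ v : W, SimpC1 G k v := by
  intro n
  induction n with
  | zero =>
    intro W _ G _ hcard hne
    haveI := hne
    have := Nat.card_pos (α := W)
    omega
  | succ n ih =>
    intro W _ G hch hcard hne
    classical
    by_cases hcomp : ∀ x y : W, x ≠ y → G.Adj x y
    · obtain ⟨v⟩ := hne
      refine ⟨v, fun x y hvx hvy hxy => ⟨hvx.ne', hvy.ne',
        Walk.cons (by exact hcomp x y hxy) Walk.nil, ?_⟩⟩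
      show 1 ≤ k - 2
      omega
    · push_neg at hcomp
      obtain ⟨u₀, w₀, hune, hnadj⟩ := hcomp
      have hcnd : ConnNonDom G {u₀} := by
        constructor
        · rw [connected_iff]
          refine ⟨?_, ⟨⟨u₀, rfl⟩⟩⟩
          rintro ⟨x, hx⟩ ⟨y, hy⟩
          have hxy : (⟨x, hx⟩ : ↥({u₀} : Set W)) = ⟨y, hy⟩ :=
            Subtype.ext ((show x = u₀ from hx).trans (show y = u₀ from hy).symm)
          exact hxy ▸ Reachable.refl _
        · intro hU
          have hw : w₀ ∈ closedNbhd G {u₀} := hU ▸ Set.mem_univ w₀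
          rcases hw with h1 | h2
          · exact hune h1.symm
          · obtain ⟨-, a, ha, hadj⟩ := h2
            obtain rfl : a = u₀ := ha
            exact hnadj hadj
      set 𝒩 : Set ℕ := {m | ∃ A : Set W, ConnNonDom G A ∧ A.ncard = m} with h𝒩
      have hne𝒩 : 𝒩.Nonempty := ⟨_, {u₀}, hcnd, rfl⟩
      have hbdd : BddAbove 𝒩 := by
        refine ⟨Nat.card W, ?_⟩
        rintro m ⟨A, -, rfl⟩
        simpa [Set.ncard_univ] using Set.ncard_le_ncard (Set.subset_univ A) Set.finite_univ
      obtain ⟨A, hA, hAcard⟩ := Nat.sSup_mem hne𝒩 hbdd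
      have hmax : ∀ s' : W, s' ∉ A → ¬ ConnNonDom G (insert s' A) := by
        intro s' hs' hcon
        have h1 : (insert s' A).ncard ∈ 𝒩 := ⟨_, hcon, rfl⟩
        have h2 : (insert s' A).ncard = A.ncard + 1 :=
          Set.ncard_insert_of_notMem hs' (Set.toFinite A)
        have h3 := le_csSup hbdd h1
        omega
      have hAne : A.Nonempty := by
        obtain ⟨⟨a, haA⟩⟩ := hA.1.nonempty
        exact ⟨a, haA⟩
      set B : Set W := (closedNbhd G A)ᶜ with hBdef
      have hBne : B.Nonempty := Set.nonempty_compl.mpr hA.2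
      have hBprop : ∀ b ∈ B, b ∉ A ∧ ∀ a ∈ A, ¬ G.Adj a b := by
        intro b hb
        rw [hBdef, Set.mem_compl_iff] at hb
        have h1 : b ∉ A := fun h => hb (Or.inl h)
        exact ⟨h1, fun a ha hadj => hb (Or.inr ⟨h1, a, ha, hadj⟩)⟩
      have hjoin : ∀ s' ∈ setNbhd G A, ∀ b ∈ B, G.Adj s' b := by
        intro s' hs' b hbB
        obtain ⟨hs'A, a, haA, hadj⟩ := hs'
        have hconn' : (G.induce (insert s' A)).Connected := connected_insert hA.1 haA hadj
        have hdom : closedNbhd G (insert s' A) = Set.univ := by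
          by_contra hne'
          exact hmax s' hs'A ⟨hconn', hne'⟩
        have hbmem : b ∈ closedNbhd G (insert s' A) := hdom ▸ Set.mem_univ b
        have hbc : b ∉ closedNbhd G A := by rwa [hBdef, Set.mem_compl_iff] at hbB
        rcases hbmem with hmem | hmem
        · rcases Set.mem_insert_iff.mp hmem with rfl | hmem2
          · exact absurd (Or.inr ⟨hs'A, a, haA, hadj⟩ : b ∈ closedNbhd G A) hbc
          · exact absurd (Or.inl hmem2 : b ∈ closedNbhd G A) hbc
        · obtain ⟨hbn, a', ha', hadj'⟩ := hmem
          rcases Set.mem_insert_iff.mp ha' with rfl | ha'A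
          · exact hadj'
          · exact absurd hadj' ((hBprop b hbB).2 a' ha'A)
      have hBlt : Nat.card ↥B ≤ n := by
        obtain ⟨a, haA⟩ := hAne
        have haB : a ∉ B := fun h => (hBprop a h).1 haA
        have h5 : Nat.card ↥B < Nat.card W := Finite.card_subtype_lt (p := (· ∈ B)) haB
        omega
      haveI : Nonempty ↥B := hBne.to_subtype
      obtain ⟨⟨v, hvB⟩, hv1⟩ := ih (G.induce B) (induce_kchordal hch B) hBlt ‹_›
      have hvc : v ∉ closedNbhd G A := by rwa [hBdef, Set.mem_compl_iff] at hvB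
      refine ⟨v, fun x y hvx hvy hxy => ?_⟩
      refine ⟨hvx.ne', hvy.ne', ?_⟩
      have hclass : ∀ z, G.Adj v z → z ∈ setNbhd G A ∨ z ∈ B := by
        intro z hz
        have hznA : z ∉ A :=
          fun hzA => hvc (Or.inr ⟨fun hvA => hvc (Or.inl hvA), z, hzA, hz.symm⟩)
        by_cases hzc : z ∈ closedNbhd G A
        · rcases hzc with h | h
          · exact absurd h hznA
          · exact Or.inl h
        · exact Or.inr hzc
      have hmk : ∀ P : G.Walk x y, (∀ u ∈ P.support, u ≠ v) → P.length ≤ k - 2 →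
          ∃ p : (G.induce {u : W | u ≠ v}).Walk ⟨x, hvx.ne'⟩ ⟨y, hvy.ne'⟩,
            p.length ≤ k - 2 := by
        intro P hPs hPl
        obtain ⟨q, hq⟩ := walk_to_induce P (hPs x P.start_mem_support)
          (hPs y P.end_mem_support) hPs
        exact ⟨q, by omega⟩
      have hedge : ∀ hxy' : G.Adj x y,
          ∃ p : (G.induce {u : W | u ≠ v}).Walk ⟨x, hvx.ne'⟩ ⟨y, hvy.ne'⟩,
            p.length ≤ k - 2 := by
        intro hxy'
        refine hmk (Walk.cons hxy' Walk.nil) ?_ ?_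
        · intro u hu
          simp only [Walk.support_cons, Walk.support_nil, List.mem_cons,
            List.mem_singleton] at hu
          rcases hu with rfl | rfl | h
          · exact hvx.ne'
          · exact hvy.ne'
          · simp at h
        · simp only [Walk.length_cons, Walk.length_nil]
          omega
      rcases hclass x hvx with hxS | hxB <;> rcases hclass y hvy with hyS | hyB
      · -- both in S
        by_cases hadjxy : G.Adj x y
        · exact hedge hadjxy
        · obtain ⟨hxA, ax, haxA, haxadj⟩ := hxS
          obtain ⟨hyA, ay, hayA, hayadj⟩ := hyS
          set T : Set W := insert x (insert y A) with hTdef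
          have hxT : x ∈ T := Set.mem_insert _ _
          have hyT : y ∈ T := Set.mem_insert_of_mem _ (Set.mem_insert _ _)
          have hAT : A ⊆ T := fun z hz =>
            Set.mem_insert_of_mem _ (Set.mem_insert_of_mem _ hz)
          have hreach : (G.induce T).Reachable ⟨x, hxT⟩ ⟨y, hyT⟩ := by
            have r1 : (G.induce T).Adj ⟨x, hxT⟩ ⟨ax, hAT haxA⟩ := by exact haxadj.symm
            have r2 : (G.induce T).Adj ⟨ay, hAT hayA⟩ ⟨y, hyT⟩ := by exact hayadj
            have rmid := (hA.1.preconnected ⟨ax, haxA⟩ ⟨ay, hayA⟩).map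
              (G.induceHomOfLE hAT).toHom
            exact r1.reachable.trans (rmid.trans r2.reachable)
          obtain ⟨π, hπ⟩ := exists_induced_path hreach
          set P := π.map (SimpleGraph.Embedding.induce (G := G) T).toHom with hPdef
          have hPsup : ∀ u ∈ P.support, u ∈ T := by
            intro u hu
            rw [hPdef, Walk.support_map] at hu
            obtain ⟨u', hu', rfl⟩ := List.mem_map.mp hu
            exact u'.2
          have hPind : IsInducedPath G P := by
            refine ⟨Walk.map_isPath_of_injective Subtype.val_injective hπ.1, ?_⟩
            intro u w hu hw hadj
            rw [hPdef, Walk.support_map] at hu hw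
            obtain ⟨u', hu', rfl⟩ := List.mem_map.mp hu
            obtain ⟨w', hw', rfl⟩ := List.mem_map.mp hw
            have hadj' : (G.induce T).Adj u' w' := by exact hadj
            have := hπ.2 u' w' hu' hw' hadj'
            rw [hPdef, Walk.edges_map]
            exact List.mem_map.mpr ⟨s(u', w'), this, Sym2.map_pair_eq _ _ _⟩
          have huA : ∀ u ∈ P.support, u ≠ x → u ≠ y → u ∈ A := by
            intro u hu hux huy
            rcases Set.mem_insert_iff.mp (hPsup u hu) with rfl | h
            · exact absurd rfl hux
            · rcases Set.mem_insert_iff.mp h with rfl | h2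
              · exact absurd rfl huy
              · exact h2
          have hint : ∀ u ∈ P.support, u ≠ x → u ≠ y → u ≠ v ∧ ¬ G.Adj v u := by
            intro u hu hux huy
            have hA' := huA u hu hux huy
            refine ⟨fun h' => hvc (Or.inl (h' ▸ hA')), fun hadj =>
              (hBprop v hvB).2 u hA' hadj.symm⟩
          have hlenP := inducedPath_length_le hch hvx hvy hadjxy hxy P hPind hint
          refine hmk P ?_ hlenP
          intro u hu
          rcases Set.mem_insert_iff.mp (hPsup u hu) with rfl | h
          · exact hvx.ne'
          · rcases Set.mem_insert_iff.mp h with rfl | h2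
            · exact hvy.ne'
            · exact fun h' => hvc (Or.inl (h' ▸ h2))
      · exact hedge (hjoin x hxS y hyB)
      · exact hedge ((hjoin y hyS x hxB).symm)
      · -- both in B
        have hax : (G.induce B).Adj ⟨v, hvB⟩ ⟨x, hxB⟩ := by exact hvx
        have hay : (G.induce B).Adj ⟨v, hvB⟩ ⟨y, hyB⟩ := by exact hvy
        obtain ⟨hx', hy', p, hp⟩ := hv1 ⟨x, hxB⟩ ⟨y, hyB⟩ hax hay
          (fun h => hxy (congrArg Subtype.val h))
        set P := (p.map (SimpleGraph.Embedding.induce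
            (G := G.induce B) {u : ↥B | u ≠ ⟨v, hvB⟩}).toHom).map
            (SimpleGraph.Embedding.induce (G := G) B).toHom with hPdef
        refine hmk P ?_ ?_
        · intro u hu
          replace hu : u ∈ ((p.map (SimpleGraph.Embedding.induce (G := G.induce B) {u : ↥B | u ≠ ⟨v, hvB⟩}).toHom).map (SimpleGraph.Embedding.induce (G := G) B).toHom).support := hu
          simp only [Walk.support_map, List.mem_map] at hu
          obtain ⟨u1, ⟨u2, hu2, rfl⟩, rfl⟩ := hu
          exact fun h => u2.2 (Subtype.ext h)
        · have hl : ((p.map (SimpleGraph.Embedding.induce (G := G.induce B) {u : ↥B | u ≠ ⟨v, hvB⟩}).toHom).map (SimpleGraph.Embedding.induce (G := G) B).toHom).length ≤ k - 2 := by simpa only [Walk.length_map] using hp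
          exact hl

end Main

theorem stmt7 [Fintype V] [Nonempty V] (G : SimpleGraph V) (k : ℕ) (hk : 3 ≤ k)
    (hch : KChordal G k) : ∃ v : V, KSimplicial G k v := by
  obtain ⟨v, h1⟩ := key hk (Nat.card V) G hch le_rfl ‹Nonempty V›
  exact ⟨v, h1, simpC2_of_chordal hch v⟩
end

section
/- For an integer k ≥ 3, every non-complete k-chordal graph contains two non-adjacent k-simplicial vertices. -/
open SimpleGraph

variable {V : Type*}

-- ==================== AUX ====================

section AuxWalk

variable {α : Type*} {H : SimpleGraph α}

lemma edge_of_length_one {a b : α} (q : H.Walk a b) (h : q.length = 1) :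
    s(a, b) ∈ q.edges := by
  cases q with
  | nil => simp at h
  | cons had q' =>
    have h0 : q'.length = 0 := by simpa using h
    have := SimpleGraph.Walk.eq_of_length_eq_zero h0
    subst this
    simp

lemma shorter_of_chord {x y : α} (p : H.Walk x y) (u w : α)
    (hu : u ∈ p.support) (hw : w ∈ p.support) (ha : H.Adj u w)
    (he : s(u, w) ∉ p.edges) :
    ∃ r : H.Walk x y, r.length < p.length ∧ ∀ z ∈ r.support, z ∈ p.support := by
  obtain ⟨q, r, rfl⟩ := Walk.mem_support_iff_exists_append.mp hu
  rw [Walk.mem_support_append_iff] at hw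
  cases hw with
  | inl hwq =>
    obtain ⟨q1, q2, rfl⟩ := Walk.mem_support_iff_exists_append.mp hwq
    have h2 : 2 ≤ q2.length := by
      by_contra h'
      interval_cases hq2 : q2.length
      · exact ha.ne' (Walk.eq_of_length_eq_zero hq2)
      · refine he ?_
        have : s(w, u) ∈ q2.edges := edge_of_length_one q2 hq2
        simp only [Walk.edges_append, List.mem_append]
        left; right
        rwa [Sym2.eq_swap] at this
    refine ⟨q1.append (Walk.cons ha.symm r), ?_, ?_⟩
    · simp only [Walk.length_append, Walk.length_cons]
      omega
    · intro z hz
      simp only [Walk.mem_support_append_iff, Walk.support_cons, List.mem_cons] at hz ⊢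
      rcases hz with hz | hz | hz
      · exact Or.inl (Or.inl hz)
      · rw [hz]; exact Or.inl (Or.inr (Walk.start_mem_support q2))
      · exact Or.inr hz
  | inr hwr =>
    obtain ⟨r1, r2, rfl⟩ := Walk.mem_support_iff_exists_append.mp hwr
    have h2 : 2 ≤ r1.length := by
      by_contra h'
      interval_cases hr1 : r1.length
      · exact ha.ne (Walk.eq_of_length_eq_zero hr1)
      · refine he ?_
        have : s(u, w) ∈ r1.edges := edge_of_length_one r1 hr1
        simp only [Walk.edges_append, List.mem_append]
        right; left; exact this
    refine ⟨q.append (Walk.cons ha r2), ?_, ?_⟩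
    · simp only [Walk.length_append, Walk.length_cons]
      omega
    · intro z hz
      simp only [Walk.mem_support_append_iff, Walk.support_cons, List.mem_cons] at hz ⊢
      rcases hz with hz | hz | hz
      · exact Or.inl hz
      · rw [hz]; exact Or.inr (Or.inl (Walk.start_mem_support r1))
      · exact Or.inr (Or.inr hz)

/-- Every walk contains an induced path between its endpoints. -/
lemma exists_induced_path_s8 {x y : α} (p : H.Walk x y) :
    ∃ q : H.Walk x y, q.IsPath ∧
      (∀ u w : α, u ∈ q.support → w ∈ q.support → H.Adj u w → s(u, w) ∈ q.edges) ∧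
      q.length ≤ p.length ∧ ∀ z ∈ q.support, z ∈ p.support := by
  classical
  generalize hn : p.length = n
  induction n using Nat.strong_induction_on generalizing x y p with
  | _ n ih =>
  subst hn
  by_cases hip : ∀ u w : α, u ∈ p.bypass.support → w ∈ p.bypass.support →
      H.Adj u w → s(u, w) ∈ p.bypass.edges
  · exact ⟨p.bypass, p.bypass_isPath, hip, p.length_bypass_le,
      fun z hz => p.support_bypass_subset hz⟩
  · push_neg at hip
    obtain ⟨u, w, hu, hw, ha, he⟩ := hip
    obtain ⟨r, hr1, hr2⟩ := shorter_of_chord p.bypass u w hu hw ha he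
    have hlt : r.length < p.length := lt_of_lt_of_le hr1 p.length_bypass_le
    obtain ⟨q, hq1, hq2, hq3, hq4⟩ := ih r.length hlt r rfl
    exact ⟨q, hq1, hq2, le_of_lt (lt_of_le_of_lt hq3 hlt),
      fun z hz => p.support_bypass_subset (hr2 z (hq4 z hz))⟩

end AuxWalk

section AuxMain

variable {G : SimpleGraph V} {k : ℕ}

/-- `k`-chordality is inherited by induced subgraphs. -/
lemma kchordal_induce (hch : KChordal G k) (s : Set V) : KChordal (G.induce s) k := by
  intro v c hc
  let f : G.induce s →g G := (SimpleGraph.Embedding.induce s (G := G)).toHom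
  have hinj : Function.Injective f := Subtype.val_injective
  have hcyc : (c.map f).IsCycle := hc.1.map hinj
  have hind : IsInducedCycle G (c.map f) := by
    refine ⟨hcyc, ?_⟩
    intro u w hu hw hadj
    rw [Walk.support_map, List.mem_map] at hu hw
    obtain ⟨u', hu', rfl⟩ := hu
    obtain ⟨w', hw', rfl⟩ := hw
    have : (G.induce s).Adj u' w' := hadj
    have he := hc.2 u' w' hu' hw' this
    rw [Walk.edges_map, List.mem_map]
    exact ⟨s(u', w'), he, by simp [Sym2.map_pair_eq]⟩
  have := hch (c.map f) hind
  rwa [Walk.length_map] at this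

/-- Closing an induced path avoiding `N[v]` internally with the vertex `v` gives an
induced cycle; `k`-chordality then bounds the length. -/
lemma chord_path_short (hk : 3 ≤ k) (hch : KChordal G k) {v x y : V}
    (hvx : G.Adj v x) (hvy : G.Adj v y) (hxy : ¬ G.Adj x y)
    (p : G.Walk x y) (hp : p.IsPath)
    (hind : ∀ u w : V, u ∈ p.support → w ∈ p.support → G.Adj u w → s(u, w) ∈ p.edges)
    (hv : v ∉ p.support)
    (hnadj : ∀ u ∈ p.support, u ≠ x → u ≠ y → ¬ G.Adj v u) :
    p.length ≤ k - 2 := by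
  classical
  by_cases hne : x = y
  · subst hne
    rw [Walk.isPath_iff_eq_nil] at hp
    subst hp
    simp only [Walk.length_nil]
    exact Nat.zero_le _
  let P : G.Walk x v := p.concat hvy.symm
  let c : G.Walk v v := Walk.cons hvx P
  have hPpath : P.IsPath := by
    rw [Walk.isPath_def, Walk.support_concat, List.nodup_append]
    refine ⟨hp.support_nodup, by simp, ?_⟩
    intro z hz z' hz' hzz'
    simp only [List.mem_singleton] at hz'
    subst hz' hzz'
    exact hv hz
  have hvP : s(v, x) ∉ P.edges := by
    rw [Walk.edges_concat, List.concat_eq_append, List.mem_append]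
    rintro (h | h)
    · exact hv (Walk.fst_mem_support_of_mem_edges p h)
    · simp only [List.mem_singleton, Sym2.eq_iff] at h
      rcases h with ⟨h1, h2⟩ | ⟨h1, h2⟩
      · exact hvy.ne h1
      · exact hne h2
  have hcyc : c.IsCycle := (Walk.cons_isCycle_iff P hvx).mpr ⟨hPpath, hvP⟩
  have hcind : IsInducedCycle G c := by
    refine ⟨hcyc, ?_⟩
    have hsupc : c.support = v :: (p.support.concat v) := by
      simp [c, P, Walk.support_cons, Walk.support_concat]
    intro u w hu hw hadj
    rw [hsupc, List.mem_cons, List.concat_eq_append, List.mem_append, List.mem_singleton] at hu hw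
    have hedges : c.edges = s(v, x) :: (p.edges.concat s(y, v)) := by
      simp [c, P, Walk.edges_cons, Walk.edges_concat]
    have key : ∀ z ∈ p.support, G.Adj v z → s(v, z) ∈ c.edges := by
      intro z hzsup hadjz
      rw [hedges]
      by_cases hzx : z = x
      · subst hzx; exact List.mem_cons_self
      by_cases hzy : z = y
      · subst hzy
        simp only [List.concat_eq_append, List.mem_cons, List.mem_append, List.mem_singleton]
        right; right
        rw [Sym2.eq_swap]
        exact Or.inl rfl
      · exact absurd hadjz (hnadj z hzsup hzx hzy)
    have hedge_sub : ∀ e ∈ p.edges, e ∈ c.edges := by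
      intro e he
      rw [hedges]
      simp only [List.concat_eq_append, List.mem_cons, List.mem_append, List.mem_singleton]
      right; left; exact he
    have hu' : u = v ∨ u ∈ p.support := by tauto
    have hw' : w = v ∨ w ∈ p.support := by tauto
    rcases hu' with rfl | hu'
    · rcases hw' with rfl | hw'
      · exact absurd hadj (G.irrefl)
      · exact key w hw' hadj
    · rcases hw' with rfl | hw'
      · rw [Sym2.eq_swap]; exact key u hu' hadj.symm
      · exact hedge_sub _ (hind u w hu' hw' hadj)
  have hlen := hch c hcind
  have hcl : c.length = p.length + 2 := by
    simp [c, P, Walk.length_cons, Walk.length_concat]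
  omega

/-- In a `k`-chordal graph, every vertex satisfies condition (C2). -/
lemma simpC2_all (hk : 3 ≤ k) (hch : KChordal G k) (v : V) : SimpC2 G k v := by
  intro x y hvx hvy hxy hne p hip hint
  have hv : v ∉ p.support := by
    intro h
    exact (hint v ⟨h, hvx.ne, hvy.ne⟩).1 rfl
  refine chord_path_short hk hch hvx hvy hxy p hip.1 hip.2 hv ?_
  intro u hu hux huy
  exact (hint u ⟨hu, hux, huy⟩).2

end AuxMain

section AuxConn

variable {G : SimpleGraph V}

/-- The homomorphism between induced subgraphs coming from a subset inclusion. -/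
def homOfLE' (G : SimpleGraph V) {s t : Set V} (h : s ⊆ t) : G.induce s →g G.induce t where
  toFun z := ⟨z.1, h z.2⟩
  map_rel' := fun hab => hab

lemma induce_singleton_connected (G : SimpleGraph V) (a : V) :
    (G.induce {a}).Connected := by
  rw [connected_iff]
  refine ⟨?_, ⟨⟨a, rfl⟩⟩⟩
  intro u v
  have : u = v := Subtype.ext (u.2.trans v.2.symm)
  rw [this]

lemma induce_insert_connected {A : Set V} (hA : (G.induce A).Connected) {a s : V}
    (ha : a ∈ A) (hadj : G.Adj a s) :
    (G.induce (insert s A)).Connected := by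
  rw [connected_iff]
  have hs : s ∈ insert s A := Set.mem_insert _ _
  have key : ∀ z : (insert s A : Set V), (G.induce (insert s A)).Reachable z ⟨s, hs⟩ := by
    rintro ⟨w, hw⟩
    rcases hw with rfl | hwA
    · rfl
    · have h1 : (G.induce A).Reachable ⟨w, hwA⟩ ⟨a, ha⟩ := hA.preconnected _ _
      have h2 := h1.map (homOfLE' G (Set.subset_insert s A))
      refine h2.trans ?_
      have : (G.induce (insert s A)).Adj ⟨a, Set.mem_insert_of_mem s ha⟩ ⟨s, hs⟩ := hadj
      exact this.reachable
  exact ⟨fun u v => (key u).trans (key v).symm, ⟨⟨s, hs⟩⟩⟩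

lemma exists_max_cnd [Finite V] {A₀ : Set V} (h : ConnNonDom G A₀) :
    ∃ A : Set V, A₀ ⊆ A ∧ MaxConnNonDom G A := by
  classical
  set F : Set (Set V) := {A | A₀ ⊆ A ∧ ConnNonDom G A} with hF
  have hfin : F.Finite := Set.toFinite F
  obtain ⟨A, hAF, hmax⟩ := Set.Finite.exists_maximalFor id F hfin ⟨A₀, subset_rfl, h⟩
  refine ⟨A, hAF.1, hAF.2, ?_⟩
  intro A' hsub hcnd
  exact Set.Subset.antisymm (hmax ⟨hAF.1.trans hsub, hcnd⟩ hsub) hsub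

lemma adj_of_max {A : Set V} (hA : MaxConnNonDom G A) {s : V} (hs : s ∈ setNbhd G A)
    {w : V} (hw : w ∉ closedNbhd G A) : G.Adj s w := by
  obtain ⟨hsA, a, haA, has⟩ := hs
  have hconn : (G.induce (insert s A)).Connected := induce_insert_connected hA.1.1 haA has
  by_cases hdom : closedNbhd G (insert s A) = Set.univ
  · have hwmem : w ∈ closedNbhd G (insert s A) := by rw [hdom]; trivial
    rcases hwmem with hw1 | hw1
    · rcases hw1 with rfl | hw1
      · exact absurd (Or.inr ⟨hsA, a, haA, has⟩) hw
      · exact absurd (Or.inl hw1) hw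
    · obtain ⟨hwnot, a', ha', hadj'⟩ := hw1
      rcases ha' with rfl | ha'
      · exact hadj'
      · exact absurd (Or.inr ⟨fun hwA => hw (Or.inl hwA), a', ha', hadj'⟩) hw
  · have hcnd : ConnNonDom G (insert s A) := ⟨hconn, hdom⟩
    have heq := hA.2 _ (Set.subset_insert s A) hcnd
    exact absurd (heq ▸ Set.mem_insert s A) hsA

end AuxConn

section AuxLift

variable {G : SimpleGraph V} {k : ℕ}

/-- Lifting condition (C1) from the subgraph outside `N[A]` to `G`, for a maximal
connected non-dominating set `A`. -/
lemma simpc1_lift (hk : 3 ≤ k) (hch : KChordal G k) {A : Set V} (hA : MaxConnNonDom G A)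
    {v : V} (hv : v ∉ closedNbhd G A)
    (hW : SimpC1 (G.induce (closedNbhd G A)ᶜ) k ⟨v, hv⟩) : SimpC1 G k v := by
  classical
  intro x y hvx hvy hxy
  have hxv : x ≠ v := hvx.ne'
  have hyv : y ≠ v := hvy.ne'
  refine ⟨hxv, hyv, ?_⟩
  have hvnA : v ∉ A := fun h => hv (Or.inl h)
  have hnotA : ∀ z, G.Adj v z → z ∉ A := by
    intro z hz hzA
    exact hv (Or.inr ⟨hvnA, z, hzA, hz.symm⟩)
  by_cases hadjxy : G.Adj x y
  · refine ⟨Walk.cons (by exact hadjxy) Walk.nil, ?_⟩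
    show 1 ≤ k - 2
    omega
  -- not adjacent
  by_cases hxW : x ∈ closedNbhd G A
  · have hxS : x ∈ setNbhd G A := by
      rcases hxW with h | h
      · exact absurd h (hnotA x hvx)
      · exact h
    by_cases hyW : y ∈ closedNbhd G A
    · -- both in N(A) : the cycle argument
      have hyS : y ∈ setNbhd G A := by
        rcases hyW with h | h
        · exact absurd h (hnotA y hvy)
        · exact h
      obtain ⟨hxnA, a, haA, hax⟩ := hxS
      obtain ⟨hynA, b, hbA, hby⟩ := hyS
      set s : Set V := insert x (insert y A) with hsdef
      have hxs : x ∈ s := Set.mem_insert _ _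
      have hys : y ∈ s := Set.mem_insert_of_mem _ (Set.mem_insert _ _)
      have hAs : A ⊆ s := fun z hz => Set.mem_insert_of_mem _ (Set.mem_insert_of_mem _ hz)
      -- reachability from x to y inside s
      have hreach : (G.induce s).Reachable ⟨x, hxs⟩ ⟨y, hys⟩ := by
        have h1 : (G.induce s).Adj ⟨x, hxs⟩ ⟨a, hAs haA⟩ := hax.symm
        have h2 : (G.induce A).Reachable ⟨a, haA⟩ ⟨b, hbA⟩ := hA.1.1.preconnected _ _
        have h3 := h2.map (homOfLE' G hAs)
        have h4 : (G.induce s).Adj ⟨b, hAs hbA⟩ ⟨y, hys⟩ := hby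
        exact (h1.reachable.trans h3).trans h4.reachable
      obtain ⟨p0⟩ := hreach
      obtain ⟨q, hqpath, hqind, _, _⟩ := exists_induced_path_s8 p0
      -- map q into G
      let f : G.induce s →g G := (SimpleGraph.Embedding.induce s (G := G)).toHom
      have hinj : Function.Injective f := Subtype.val_injective
      let P : G.Walk x y := q.map f
      have hPpath : P.IsPath := Walk.map_isPath_of_injective hinj hqpath
      have hPind : ∀ u w : V, u ∈ P.support → w ∈ P.support → G.Adj u w → s(u, w) ∈ P.edges := by
        intro u w hu hw hadj
        change u ∈ (q.map f).support at hu; change w ∈ (q.map f).support at hw; change s(u, w) ∈ (q.map f).edges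
        rw [Walk.support_map, List.mem_map] at hu hw
        obtain ⟨u', hu', rfl⟩ := hu
        obtain ⟨w', hw', rfl⟩ := hw
        have : (G.induce s).Adj u' w' := hadj
        have he := hqind u' w' hu' hw' this
        rw [Walk.edges_map, List.mem_map]
        exact ⟨s(u', w'), he, by simp [Sym2.map_pair_eq]⟩
      have hvns : v ∉ s := by
        rintro (rfl | rfl | hvA)
        · exact hxv rfl
        · exact hyv rfl
        · exact hvnA hvA
      have hvP : v ∉ P.support := by
        intro h
        change v ∈ (q.map f).support at h
        rw [Walk.support_map, List.mem_map] at h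
        obtain ⟨u', _, rfl⟩ := h
        exact hvns u'.2
      have hPnadj : ∀ u ∈ P.support, u ≠ x → u ≠ y → ¬ G.Adj v u := by
        intro u hu hux huy hadj
        change u ∈ (q.map f).support at hu
        rw [Walk.support_map, List.mem_map] at hu
        obtain ⟨u', _, rfl⟩ := hu
        have : (u' : V) ∈ s := u'.2
        rcases this with h | h | h
        · exact hux h
        · exact huy h
        · exact hnotA _ hadj h
      have hlen : P.length ≤ k - 2 :=
        chord_path_short hk hch hvx hvy hadjxy P hPpath hPind hvP hPnadj
      -- now map q into G.induce {u | u ≠ v}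
      let g : G.induce s →g G.induce {u : V | u ≠ v} :=
        { toFun := fun z => ⟨z.1, fun h => hvns (h ▸ z.2)⟩
          map_rel' := fun hab => hab }
      refine ⟨q.map g, ?_⟩
      rw [Walk.length_map]
      change (q.map f).length ≤ k - 2 at hlen
      rw [Walk.length_map] at hlen
      exact hlen
    · -- x ∈ N(A), y outside N[A] : adjacent by maximality, contradiction
      exact absurd ((adj_of_max hA hxS hyW).symm.symm) (by
        exact fun h => hadjxy (adj_of_max hA hxS hyW))
  · by_cases hyW : y ∈ closedNbhd G A
    · have hyS : y ∈ setNbhd G A := by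
        rcases hyW with h | h
        · exact absurd h (hnotA y hvy)
        · exact h
      exact absurd (adj_of_max hA hyS hxW).symm hadjxy
    · -- both outside N[A] : use the hypothesis on the induced subgraph
      have hadjx : (G.induce (closedNbhd G A)ᶜ).Adj ⟨v, hv⟩ ⟨x, hxW⟩ := hvx
      have hadjy : (G.induce (closedNbhd G A)ᶜ).Adj ⟨v, hv⟩ ⟨y, hyW⟩ := hvy
      have hne' : (⟨x, hxW⟩ : ((closedNbhd G A)ᶜ : Set V)) ≠ ⟨y, hyW⟩ :=
        fun h => hxy (congrArg Subtype.val h)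
      obtain ⟨hx1, hy1, q, hq⟩ := hW _ _ hadjx hadjy hne'
      let g : (G.induce (closedNbhd G A)ᶜ).induce {u | u ≠ (⟨v, hv⟩ : ((closedNbhd G A)ᶜ : Set V))}
          →g G.induce {u : V | u ≠ v} :=
        { toFun := fun z => ⟨z.1.1, fun h => z.2 (Subtype.ext h)⟩
          map_rel' := fun hab => hab }
      refine ⟨q.map g, ?_⟩
      rw [Walk.length_map]
      exact hq

end AuxLift

section AuxFinal

variable {G : SimpleGraph V} {k : ℕ}

lemma singleton_cnd {a b : V} (hne : a ≠ b) (hnadj : ¬ G.Adj a b) : ConnNonDom G {a} := by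
  refine ⟨induce_singleton_connected G a, ?_⟩
  intro h
  have hb : b ∈ closedNbhd G {a} := by rw [h]; trivial
  rcases hb with hb | hb
  · exact hne (Set.mem_singleton_iff.mp hb).symm
  · obtain ⟨_, a', ha', hadj⟩ := hb
    have : a' = a := Set.mem_singleton_iff.mp ha'
    subst this
    exact hnadj hadj

lemma exists_c1 {k : ℕ} (hk : 3 ≤ k) :
    ∀ (n : ℕ) (W : Type u) [Fintype W] (G : SimpleGraph W), Fintype.card W ≤ n →
      KChordal G k → W → ∃ v : W, SimpC1 G k v := by
  intro n
  induction n using Nat.strong_induction_on with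
  | _ n ih =>
  intro W _ G hcard hch v₀
  classical
  by_cases hcomp : ∀ a b : W, a ≠ b → G.Adj a b
  · refine ⟨v₀, ?_⟩
    intro x y hx hy hne
    refine ⟨hx.ne', hy.ne', Walk.cons (by exact hcomp x y hne) Walk.nil, ?_⟩
    show 1 ≤ k - 2
    omega
  · push_neg at hcomp
    obtain ⟨a, b, hne, hnadj⟩ := hcomp
    obtain ⟨A, hsubA, hA⟩ := exists_max_cnd (singleton_cnd hne hnadj)
    obtain ⟨w, hw⟩ := (Set.ne_univ_iff_exists_notMem _).mp hA.1.2
    have haA : a ∈ A := hsubA rfl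
    have hanW : a ∉ ((closedNbhd G A)ᶜ : Set W) := fun h => h (Or.inl haA)
    have hcardlt : Fintype.card ((closedNbhd G A)ᶜ : Set W) < Fintype.card W :=
      Fintype.card_subtype_lt (x := a) (by simpa using hanW)
    obtain ⟨v', hv'⟩ := ih _ (Nat.lt_of_lt_of_le hcardlt hcard) _
      (G.induce ((closedNbhd G A)ᶜ)) le_rfl (kchordal_induce hch _) ⟨w, hw⟩
    exact ⟨v'.1, simpc1_lift hk hch hA v'.2 hv'⟩

end AuxFinal


theorem stmt8 [Fintype V] (G : SimpleGraph V) (k : ℕ) (hk : 3 ≤ k)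
    (hch : KChordal G k) (hnc : NonComplete G) :
    ∃ u v : V, u ≠ v ∧ ¬ G.Adj u v ∧ KSimplicial G k u ∧ KSimplicial G k v := by
  classical
  obtain ⟨a, b, hab, hnadj⟩ := hnc
  obtain ⟨A₁, hsub₁, hA₁⟩ := exists_max_cnd (singleton_cnd hab hnadj)
  obtain ⟨w₁, hw₁⟩ := (Set.ne_univ_iff_exists_notMem _).mp hA₁.1.2
  obtain ⟨v', hv'⟩ := exists_c1 hk (Fintype.card ((closedNbhd G A₁)ᶜ : Set V)) _
    (G.induce ((closedNbhd G A₁)ᶜ)) le_rfl (kchordal_induce hch _) ⟨w₁, hw₁⟩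
  have hv1 : SimpC1 G k v'.1 := simpc1_lift hk hch hA₁ v'.2 hv'
  have haA₁ : a ∈ A₁ := hsub₁ rfl
  have hvW₁ : (v' : V) ∉ closedNbhd G A₁ := v'.2
  have hva : (v' : V) ≠ a := fun h => hvW₁ (h ▸ Or.inl haA₁)
  have hvadja : ¬ G.Adj (v' : V) a := by
    intro h
    exact hvW₁ (Or.inr ⟨fun hvA => hvW₁ (Or.inl hvA), a, haA₁, h.symm⟩)
  obtain ⟨A₂, hsub₂, hA₂⟩ := exists_max_cnd (singleton_cnd hva hvadja)
  obtain ⟨w₂, hw₂⟩ := (Set.ne_univ_iff_exists_notMem _).mp hA₂.1.2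
  obtain ⟨u', hu'⟩ := exists_c1 hk (Fintype.card ((closedNbhd G A₂)ᶜ : Set V)) _
    (G.induce ((closedNbhd G A₂)ᶜ)) le_rfl (kchordal_induce hch _) ⟨w₂, hw₂⟩
  have hu1 : SimpC1 G k u'.1 := simpc1_lift hk hch hA₂ u'.2 hu'
  have hvA₂ : (v' : V) ∈ A₂ := hsub₂ rfl
  have huW₂ : (u' : V) ∉ closedNbhd G A₂ := u'.2
  have huv : (u' : V) ≠ (v' : V) := fun h => huW₂ (h ▸ Or.inl hvA₂)
  have hunadj : ¬ G.Adj (u' : V) (v' : V) := by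
    intro h
    exact huW₂ (Or.inr ⟨fun huA => huW₂ (Or.inl huA), v'.1, hvA₂, h.symm⟩)
  exact ⟨u'.1, v'.1, huv, hunadj, ⟨hu1, simpC2_all hk hch _⟩, ⟨hv1, simpC2_all hk hch _⟩⟩
end
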